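/- For every p > 0 with p ≠ 2 and every z ∈ (0, 1): (1 − z)^{p/2 + 1}/(p/2 + 1) · ₂F₁( p/4 + 1/2, p/4; 3/2; z² ) = ( (1/8) / ( (p/4 − 1/2)·(p/4 + 1/2) ) ) · ( (1 − z)²/z ) · [ 1 − ((1 − z)/(1 + z))^{p/2 − 1} ]. -/

import Mathlib

open Filter Topology

/-- The Pochhammer rising factorial `(a)ₙ = a (a+1) ⋯ (a+n-1)`. -/
noncomputable def poch (a : ℝ) : ℕ → ℝ
  | 0 => 1
  | n + 1 => poch a n * (a + n)

/-- The Gauss hypergeometric function `₂F₁(a, b; c; x)`, defined for `|x| < 1`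
by the convergent power series `∑ (a)ₙ (b)ₙ / (c)ₙ · xⁿ/n!`. -/
noncomputable def hyp2F1 (a b c x : ℝ) : ℝ :=
  ∑' n : ℕ, poch a n * poch b n / poch c n * x ^ n / (Nat.factorial n : ℝ)


noncomputable def gch (s : ℝ) : ℕ → ℝ
  | 0 => 1
  | n + 1 => gch s n * (s - n) / (n + 1)

lemma gch_eventually_zero {s : ℝ} {N : ℕ} (h : gch s N = 0) : ∀ n, N ≤ n → gch s n = 0 := by
  intro n hn
  induction n with
  | zero => simpa [Nat.le_zero.mp hn] using h
  | succ m ih =>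
    rcases Nat.lt_or_ge N (m+1) with h1 | h1
    · rw [gch, ih (Nat.lt_succ_iff.mp h1)]; ring
    · have : N = m + 1 := le_antisymm hn h1
      simpa [this] using h

lemma summable_abs_gch (s : ℝ) {r : ℝ} (hr0 : 0 ≤ r) (hr : r < 1) :
    Summable (fun n => |gch s n| * r ^ n) := by
  by_cases hz : ∃ N, gch s N = 0
  · obtain ⟨N, hN⟩ := hz
    apply summable_of_ne_finset_zero (s := Finset.range (N+1))
    intro n hn
    rw [gch_eventually_zero hN n (Nat.le_of_succ_le (by simpa using hn))]
    simp
  · push_neg at hz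
    by_cases hr0' : r = 0
    · apply summable_of_ne_finset_zero (s := Finset.range 1)
      intro n hn
      have : n ≠ 0 := by simpa using hn
      simp [hr0', zero_pow this]
    have hrpos : 0 < r := lt_of_le_of_ne hr0 (Ne.symm hr0')
    apply summable_of_ratio_test_tendsto_lt_one hr
    · filter_upwards with n
      exact mul_ne_zero (abs_ne_zero.mpr (hz n)) (pow_ne_zero _ (ne_of_gt hrpos))
    · have key : ∀ n : ℕ, ‖|gch s (n+1)| * r ^ (n+1)‖ / ‖|gch s n| * r ^ n‖
          = |(s - n) / (n + 1)| * r := by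
        intro n
        rw [Real.norm_eq_abs, Real.norm_eq_abs]
        rw [abs_mul, abs_mul, abs_abs, abs_abs, abs_pow, abs_pow, abs_of_nonneg hr0]
        rw [gch, abs_div, abs_mul, abs_div]
        rw [pow_succ]
        rw [div_eq_iff (by
          have := mul_pos (abs_pos.mpr (hz n)) (pow_pos hrpos n)
          exact ne_of_gt this)]
        push_cast
        field_simp
      simp_rw [key]
      have h1 : Tendsto (fun n : ℕ => (s - n) / (n + 1)) atTop (𝓝 (-1)) := by
        have : (fun n : ℕ => (s - n) / (n + 1)) = fun n : ℕ => (s + 1) / (n + 1) - 1 := by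
          funext n
          have : (n:ℝ) + 1 ≠ 0 := by positivity
          field_simp
          ring
        rw [this]
        have := (tendsto_const_div_atTop_nhds_zero_nat (s + 1)).comp (tendsto_add_atTop_nat 1)
        simpa using this.sub tendsto_const_nhds
      have h2 : Tendsto (fun n : ℕ => |(s - n) / (n + 1)|) atTop (𝓝 1) := by
        simpa using h1.abs
      simpa using h2.mul (tendsto_const_nhds (x := r))

lemma summable_gch (s : ℝ) {x : ℝ} (hx : |x| < 1) :
    Summable (fun n => gch s n * x ^ n) := by
  apply Summable.of_norm_bounded (summable_abs_gch s (abs_nonneg x) hx)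
  intro n
  rw [Real.norm_eq_abs, abs_mul, abs_pow]

lemma gch_zero (s : ℝ) : gch s 0 = 1 := rfl


lemma gch_succ (s : ℝ) (n : ℕ) : gch s (n + 1) = gch s n * (s - n) / (n + 1) := by
  simp [gch]

lemma gch_succ_mul (s : ℝ) (n : ℕ) : ((n:ℝ) + 1) * gch s (n + 1) = s * gch (s - 1) n := by
  induction n with
  | zero => simp [gch]
  | succ m ih =>
    have hm : (m:ℝ) + 1 ≠ 0 := by positivity
    have hm2 : (m:ℝ) + 1 + 1 ≠ 0 := by positivity
    rw [gch_succ s (m+1), gch_succ (s-1) m]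
    push_cast
    field_simp
    linear_combination (s-(m:ℝ)-1)*ih

lemma gch_pascal (s : ℝ) (n : ℕ) : gch s (n + 1) = gch (s - 1) (n + 1) + gch (s - 1) n := by
  induction n with
  | zero => simp [gch]
  | succ m ih =>
    have hm : (m:ℝ) + 1 ≠ 0 := by positivity
    have hm2 : (m:ℝ) + 1 + 1 ≠ 0 := by positivity
    have hd : gch (s-1) m * ((s-1) - m) = ((m:ℝ)+1) * gch (s-1) (m+1) := by
      rw [gch_succ (s-1) m]; field_simp
    rw [gch_succ s (m+1), gch_succ (s-1) (m+1), ih]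
    push_cast
    field_simp
    linear_combination hd



theorem hasSum_gch (s : ℝ) {x : ℝ} (hx : |x| < 1) :
    HasSum (fun n => gch s n * x ^ n) ((1 + x) ^ s) := by
  set r : ℝ := (|x| + 1) / 2 with hr_def
  have hxr : |x| < r := by rw [hr_def]; linarith
  have hr0 : 0 < r := lt_of_le_of_lt (abs_nonneg x) hxr
  have hr1 : r < 1 := by rw [hr_def]; linarith
  set t : Set ℝ := Set.Ioo (-r) r with ht_def
  have ht : IsOpen t := isOpen_Ioo
  have htc : Convex ℝ t := convex_Ioo _ _
  have htp : IsPreconnected t := htc.isPreconnected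
  have hmem : ∀ {y : ℝ}, y ∈ t → |y| < r := fun hy => abs_lt.mpr ⟨hy.1, hy.2⟩
  have h0t : (0:ℝ) ∈ t := ⟨neg_lt_zero.mpr hr0, hr0⟩
  have hxt : x ∈ t := abs_lt.mp hxr |> fun h => ⟨h.1, h.2⟩
  set f : ℝ → ℝ := fun y => ∑' n, gch s n * y ^ n with hf_def
  set f₁ : ℝ → ℝ := fun y => ∑' n, gch (s-1) n * y ^ n with hf1_def
  -- summability on t
  have hsumt : ∀ {y : ℝ}, y ∈ t → Summable (fun n => gch s n * y ^ n) :=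
    fun hy => summable_gch s ((hmem hy).trans hr1)
  have hsumt1 : ∀ {y : ℝ}, y ∈ t → Summable (fun n => gch (s-1) n * y ^ n) :=
    fun hy => summable_gch (s-1) ((hmem hy).trans hr1)
  -- derivative bound
  set u : ℕ → ℝ := fun n => match n with
    | 0 => 0
    | (m+1) => |s| * (|gch (s-1) m| * r ^ m) with hu_def
  have hu : Summable u := by
    apply (summable_nat_add_iff 1).mp
    exact ((summable_abs_gch (s-1) hr0.le hr1).mul_left |s|).congr (fun n => rfl)
  set g' : ℕ → ℝ → ℝ := fun n y => gch s n * ((n:ℝ) * y ^ (n-1)) with hg'_def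
  have hg : ∀ (n : ℕ) (y : ℝ), y ∈ t → HasDerivAt (fun z => gch s n * z ^ n) (g' n y) y :=
    fun n y _ => (hasDerivAt_pow n y).const_mul (gch s n)
  have hbound : ∀ (n : ℕ) (y : ℝ), y ∈ t → ‖g' n y‖ ≤ u n := by
    intro n y hy
    match n with
    | 0 => simp [hg'_def, hu_def]
    | (m+1) =>
      have he : g' (m+1) y = s * gch (s-1) m * y ^ m := by
        rw [hg'_def]
        simp only [Nat.add_sub_cancel, Nat.cast_add, Nat.cast_one]
        linear_combination (y ^ m) * gch_succ_mul s m
      have hu1 : u (m+1) = |s| * (|gch (s-1) m| * r ^ m) := rfl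
      rw [he, hu1, Real.norm_eq_abs, abs_mul, abs_mul, abs_pow, mul_assoc]
      have hym : |y| ^ m ≤ r ^ m := pow_le_pow_left₀ (abs_nonneg y) (hmem hy).le m
      have h1 : (0:ℝ) ≤ |gch (s-1) m| := abs_nonneg _
      have h2 : (0:ℝ) ≤ |s| := abs_nonneg _
      nlinarith [hym, mul_le_mul_of_nonneg_left hym h1]
  -- derivative of f on t
  have hderiv : ∀ {y : ℝ}, y ∈ t → HasDerivAt f (s * f₁ y) y := by
    intro y hy
    have hd := hasDerivAt_tsum_of_isPreconnected hu ht htp hg hbound h0t (hsumt h0t) hy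
    have hsum' : Summable (fun n => g' n y) :=
      Summable.of_norm_bounded hu (fun n => hbound n y hy)
    have : ∑' n, g' n y = s * f₁ y := by
      rw [Summable.tsum_eq_zero_add hsum']
      have h1 : g' 0 y = 0 := by simp [hg'_def]
      have h2 : ∀ n : ℕ, g' (n+1) y = s * (gch (s-1) n * y ^ n) := by
        intro n
        rw [hg'_def]
        simp only [Nat.add_sub_cancel, Nat.cast_add, Nat.cast_one]
        linear_combination (y ^ n) * gch_succ_mul s n
      simp_rw [h1, h2, zero_add]
      rw [tsum_mul_left]
    rw [← this]
    exact hd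
  -- Pascal: f y = (1+y) * f₁ y on t
  have hpascal : ∀ {y : ℝ}, y ∈ t → f y = (1 + y) * f₁ y := by
    intro y hy
    have A : HasSum (fun n => gch (s-1) n * y ^ n) (f₁ y) := (hsumt1 hy).hasSum
    set F : ℕ → ℝ := fun n => match n with
      | 0 => 0
      | (m+1) => gch (s-1) m * y ^ (m+1) with hF_def
    have hB : HasSum F (y * f₁ y) := by
      have := A.mul_left y
      have h1 : HasSum (fun n => F (n+1)) (y * f₁ y) := by
        refine this.congr_fun fun n => ?_
        show gch (s-1) n * y ^ (n+1) = y * (gch (s-1) n * y ^ n)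
        rw [pow_succ]; ring
      have := (hasSum_nat_add_iff (f := F) 1).mp h1
      simpa [show F 0 = 0 from rfl] using this
    have hC : HasSum (fun n => gch s n * y ^ n) (f₁ y + y * f₁ y) := by
      refine (A.add hB).congr_fun fun n => ?_
      match n with
      | 0 =>
        show gch s 0 * y ^ 0 = gch (s-1) 0 * y ^ 0 + 0
        simp [gch]
      | (m+1) =>
        show gch s (m+1) * y ^ (m+1) = gch (s-1) (m+1) * y ^ (m+1) + gch (s-1) m * y ^ (m+1)
        rw [gch_pascal]; ring
    show (∑' n, gch s n * y ^ n) = (1 + y) * f₁ y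
    rw [hC.tsum_eq]
    ring
  -- the quotient is constant
  have hpos : ∀ {y : ℝ}, y ∈ t → (0:ℝ) < 1 + y := by
    intro y hy
    have := hy.1
    nlinarith [hr1]
  set G : ℝ → ℝ := fun y => f y * (1 + y) ^ (-s) with hG_def
  have hGderiv : ∀ {y : ℝ}, y ∈ t → HasDerivAt G 0 y := by
    intro y hy
    have h1 : HasDerivAt (fun z : ℝ => (1 + z) ^ (-s)) (-s * (1 + y) ^ (-s - 1)) y := by
      have hbase : HasDerivAt (fun z : ℝ => 1 + z) 1 y := by
        simpa using (hasDerivAt_id y).const_add 1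
      have := hbase.rpow_const (p := -s) (Or.inl (ne_of_gt (hpos hy)))
      simpa using this
    have h2 := (hderiv hy).mul h1
    have key : s * f₁ y * (1 + y) ^ (-s) + f y * (-s * (1 + y) ^ (-s - 1)) = 0 := by
      rw [hpascal hy]
      have : (1 + y) * (1 + y) ^ (-s - 1) = (1 + y) ^ (-s) := by
        nth_rewrite 1 [← Real.rpow_one (1 + y)]
        rw [← Real.rpow_add (hpos hy)]
        norm_num
      linear_combination (-(s * f₁ y)) * this
    rw [← key]
    exact h2
  have hconst : G x = G 0 := by
    apply htc.is_const_of_fderivWithin_eq_zero (𝕜 := ℝ) _ _ hxt h0t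
    · intro y hy
      exact ((hGderiv hy).differentiableAt).differentiableWithinAt
    · intro y hy
      rw [fderivWithin_of_isOpen ht hy]
      have := ((hGderiv hy).hasFDerivAt).fderiv
      rw [this]
      ext w
      simp
  have hf0 : f 0 = 1 := by
    rw [hf_def]
    show (∑' n, gch s n * (0:ℝ) ^ n) = 1
    rw [tsum_eq_single 0]
    · simp [gch]
    · intro n hn
      simp [zero_pow hn]
  have hG0 : G 0 = 1 := by
    rw [hG_def]; simp [hf0]
  have hfx : f x = (1 + x) ^ s := by
    have h1 : f x * (1 + x) ^ (-s) = 1 := by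
      have h1' := hconst
      rw [hG0] at h1'
      exact h1'
    have h2 : ((1:ℝ) + x) ^ (-s) * (1 + x) ^ s = 1 := by
      rw [← Real.rpow_add (hpos hxt)]; norm_num
    calc f x = f x * ((1 + x) ^ (-s) * (1 + x) ^ s) := by rw [h2, mul_one]
    _ = (f x * (1 + x) ^ (-s)) * (1 + x) ^ s := by ring
    _ = (1 + x) ^ s := by rw [h1, one_mul]
  have := (summable_gch s hx).hasSum
  rwa [show (∑' n, gch s n * x ^ n) = f x from rfl, hfx] at this




lemma poch_succ (a : ℝ) (n : ℕ) : poch a (n + 1) = poch a n * (a + n) := by simp [poch]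

lemma poch_pos {a : ℝ} (h : 0 < a) (n : ℕ) : 0 < poch a n := by
  induction n with
  | zero => simp [poch]
  | succ m ih =>
    rw [poch_succ]
    have : (0:ℝ) < a + m := by positivity
    exact mul_pos ih this

lemma key_coeff (a : ℝ) (n : ℕ) :
    gch (1 - 2*a) (2*n+1)
      = (1 - 2*a) * (poch (a + 1/2) n * poch a n / poch (3/2) n / (Nat.factorial n : ℝ)) := by
  induction n with
  | zero => simp [gch_succ, gch_zero, poch]
  | succ m ih =>
    have hp32 : (0:ℝ) < poch (3/2) m := poch_pos (by norm_num) m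
    have hfac : (0:ℝ) < (Nat.factorial m : ℝ) := by positivity
    have e1 : 2*(m+1)+1 = (2*m+1)+1+1 := by ring
    rw [e1, gch_succ, gch_succ, ih]
    rw [poch_succ, poch_succ, poch_succ, Nat.factorial_succ]
    push_cast
    field_simp
    ring

lemma hasSum_hyp (a : ℝ) {z : ℝ} (hz1 : |z| < 1) (hz0 : z ≠ 0) (hs : 1 - 2*a ≠ 0) :
    HasSum (fun n : ℕ => poch (a + 1/2) n * poch a n / poch (3/2) n * (z^2)^n / (Nat.factorial n : ℝ))
      (((1+z)^(1-2*a) - (1-z)^(1-2*a)) / (2*(1-2*a)*z)) := by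
  set s : ℝ := 1 - 2*a with hs_def
  have hzneg : |(-z)| < 1 := by rwa [abs_neg]
  have hplus := hasSum_gch s hz1
  have hminus := hasSum_gch s hzneg
  rw [show (1 + -z) = 1 - z by ring] at hminus
  have hdiff := hplus.sub hminus
  set f : ℕ → ℝ := fun m => gch s m * z ^ m - gch s m * (-z) ^ m with hf_def
  have hinj : Function.Injective (fun n : ℕ => 2*n+1) := by
    intro a b hab
    simpa using hab
  have hzero : ∀ m, m ∉ Set.range (fun n : ℕ => 2*n+1) → f m = 0 := by
    intro m hm
    have heven : Even m := by
      by_contra hodd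
      rw [Nat.not_even_iff_odd] at hodd
      obtain ⟨k, hk⟩ := hodd
      exact hm ⟨k, by simp; omega⟩
    rw [hf_def]
    simp only
    rw [heven.neg_pow]
    ring
  have hodd : HasSum (fun n : ℕ => f (2*n+1)) ((1+z)^s - (1-z)^s) :=
    (Function.Injective.hasSum_iff hinj hzero).mpr hdiff
  have hterm : ∀ n : ℕ, f (2*n+1)
      = (2*s*z) * (poch (a + 1/2) n * poch a n / poch (3/2) n * (z^2)^n / (Nat.factorial n : ℝ)) := by
    intro n
    have hoddn : Odd (2*n+1) := ⟨n, by ring⟩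
    rw [hf_def]
    simp only
    rw [hoddn.neg_pow, key_coeff a n]
    have hzp : z ^ (2*n+1) = z * (z^2)^n := by
      rw [← pow_mul, ← pow_succ']
    rw [hzp]
    ring
  have hodd2 : HasSum (fun n : ℕ =>
      (2*s*z) * (poch (a + 1/2) n * poch a n / poch (3/2) n * (z^2)^n / (Nat.factorial n : ℝ)))
      ((1+z)^s - (1-z)^s) := by
    refine hodd.congr_fun fun n => ?_
    exact (hterm n).symm
  have hc : (2*s*z) ≠ 0 := by
    apply mul_ne_zero (mul_ne_zero two_ne_zero hs) hz0
  have := hodd2.mul_left (2*s*z)⁻¹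
  have heq : ∀ n : ℕ, (2*s*z)⁻¹ * ((2*s*z) * (poch (a + 1/2) n * poch a n / poch (3/2) n * (z^2)^n / (Nat.factorial n : ℝ)))
      = poch (a + 1/2) n * poch a n / poch (3/2) n * (z^2)^n / (Nat.factorial n : ℝ) := by
    intro n
    rw [← mul_assoc, inv_mul_cancel₀ hc, one_mul]
  rw [show (2*s*z)⁻¹ * ((1+z)^s - (1-z)^s) = ((1+z)^s - (1-z)^s) / (2*s*z) by
    rw [div_eq_inv_mul]] at this
  exact this.congr_fun (fun n => (heq n).symm)




lemma alg_aux (z A B w q r : ℝ) (hz0 : z ≠ 0) (hA : A ≠ 0) (hw : w ≠ 0)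
    (hq : q ≠ 0) (hr : r ≠ 0) :
    A / q * ((B - w / A) / (2 * r * z)) = -1 / (2 * q * r) * (w / z) * (1 - A * B / w) := by
  field_simp
  ring

/-- **Elementary closed form of `F_{p,1}`:** for `p > 0`, `p ≠ 2` and `z ∈ (0,1)`,
`(1-z)^{p/2+1}/(p/2+1) · ₂F₁(p/4+1/2, p/4; 3/2; z²)
  = (1/8)/((p/4-1/2)(p/4+1/2)) · ((1-z)²/z) · [1 - ((1-z)/(1+z))^{p/2-1}]`. -/
theorem hyp2F1_q_one_closed_form
    (p : ℝ) (hp : 0 < p) (hp2 : p ≠ 2) (z : ℝ) (hz : z ∈ Set.Ioo (0:ℝ) 1) :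
    (1 - z) ^ (p / 2 + 1) / (p / 2 + 1) *
        hyp2F1 (p / 4 + 1 / 2) (p / 4) (3 / 2) (z ^ 2) =
      ((1 / 8) / ((p / 4 - 1 / 2) * (p / 4 + 1 / 2))) * ((1 - z) ^ 2 / z) *
        (1 - ((1 - z) / (1 + z)) ^ (p / 2 - 1)) := by
  obtain ⟨hz0, hz1⟩ := hz
  have hzabs : |z| < 1 := by rw [abs_of_pos hz0]; exact hz1
  have h1mz : (0:ℝ) < 1 - z := by linarith
  have h1pz : (0:ℝ) < 1 + z := by linarith
  have hs : 1 - 2*(p/4) ≠ 0 := by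
    intro h; apply hp2; linarith
  have H : hyp2F1 (p / 4 + 1 / 2) (p / 4) (3 / 2) (z ^ 2)
      = ((1+z)^(1-p/2) - (1-z)^(1-p/2)) / (2*(1-p/2)*z) := by
    rw [hyp2F1]
    have := (hasSum_hyp (p/4) hzabs (ne_of_gt hz0) hs).tsum_eq
    rw [show 1 - 2*(p/4) = 1 - p/2 by ring] at this
    exact this
  set A : ℝ := (1 - z) ^ (p / 2 + 1) with hA_def
  set B : ℝ := (1 + z) ^ (1 - p/2) with hB_def
  have hApos : 0 < A := Real.rpow_pos_of_pos h1mz _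
  have hBpos : 0 < B := Real.rpow_pos_of_pos h1pz _
  have fact1 : A * (1 - z) ^ (1 - p/2) = (1 - z) ^ 2 := by
    rw [hA_def, ← Real.rpow_add h1mz,
      show p/2 + 1 + (1 - p/2) = ((2:ℕ):ℝ) by push_cast; ring, Real.rpow_natCast]
  have e1 : (1 - z) ^ 2 * (1 - z) ^ (p/2 - 1) = A := by
    rw [hA_def, ← Real.rpow_natCast (1 - z) 2, ← Real.rpow_add h1mz]
    congr 1
    push_cast; ring
  have e2 : B * (1 + z) ^ (p/2 - 1) = 1 := by
    rw [hB_def, ← Real.rpow_add h1pz, show 1 - p/2 + (p/2 - 1) = (0:ℝ) by ring,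
      Real.rpow_zero]
  have fact2 : (1 - z) ^ 2 * ((1 - z) / (1 + z)) ^ (p/2 - 1) = A * B := by
    rw [Real.div_rpow h1mz.le h1pz.le]
    have hF : (1 + z) ^ (p/2 - 1) ≠ 0 := (Real.rpow_pos_of_pos h1pz _).ne'
    rw [show (1-z)^2 * ((1-z)^(p/2-1) / (1+z)^(p/2-1))
        = ((1-z)^2 * (1-z)^(p/2-1)) / (1+z)^(p/2-1) by ring, e1, div_eq_iff hF]
    linear_combination (-A) * e2
  have hC : (1 - z) ^ (1 - p/2) = (1 - z) ^ 2 / A := by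
    rw [eq_div_iff hApos.ne']
    linear_combination fact1
  have hD : ((1 - z) / (1 + z)) ^ (p/2 - 1) = A * B / (1 - z) ^ 2 := by
    rw [eq_div_iff (pow_ne_zero 2 h1mz.ne')]
    linear_combination fact2
  rw [H, hC, hD]
  have hq1 : p/4 - 1/2 ≠ 0 := fun h => hp2 (by linarith)
  have hq2 : p/4 + 1/2 ≠ 0 := by positivity
  have hp21 : p/2 + 1 ≠ 0 := by positivity
  have hs' : 1 - p/2 ≠ 0 := by intro h; apply hp2; linarith
  have hQ : (p/4 - 1/2)*(p/4 + 1/2) ≠ 0 := mul_ne_zero hq1 hq2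
  have hno : 2*(p/2 + 1)*(1 - p/2) ≠ 0 := mul_ne_zero (mul_ne_zero two_ne_zero hp21) hs'
  have hK : (1/8)/((p/4 - 1/2)*(p/4 + 1/2)) = -1/(2*(p/2 + 1)*(1 - p/2)) := by
    rw [div_eq_div_iff hQ hno]
    ring
  rw [hK]
  exact alg_aux z A B ((1 - z)^2) (p/2 + 1) (1 - p/2) hz0.ne' hApos.ne'
    (pow_ne_zero 2 h1mz.ne') hp21 hs'
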